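/- Let n ≥ 2k ≥ 2. There exist constants δ > 0 and α > 0 such that for every skew-Hermitian matrix X ∈ ℂ^{n×n} of the block form X = [[A, −B†], [B, 0]] with A ∈ ℂ^{k×k} skew-Hermitian and B ∈ ℂ^{(n−k)×k}, if (1/√2)·‖X‖_F ≤ δ then (1/√2)·‖X‖_F ≤ α·‖exp(X)·Ψ₀ − Ψ₀‖_F, where Ψ₀ = [1_k; 0] ∈ ℂ^{n×k}. In particular, locally on the Stiefel manifold the geodesic distance r^V is bounded above by α times the chordal distance d^V. -/

import Mathlib

set_option maxHeartbeats 1000000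


open Matrix

/-- The Frobenius norm of a complex matrix. -/
noncomputable def frobNorm {m n : Type*} [Fintype m] [Fintype n]
    (M : Matrix m n ℂ) : ℝ :=
  Real.sqrt (∑ i, ∑ j, ‖M i j‖ ^ 2)

/-- The base point `Ψ₀ = [1_k; 0]` of the Stiefel manifold, with rows indexed by
`Fin k ⊕ Fin m` (so the ambient dimension is `n = k + m`). -/
def basePoint (k m : ℕ) : Matrix (Fin k ⊕ Fin m) (Fin k) ℂ :=
  Matrix.of fun i j => Sum.elim (fun i' => if i' = j then (1 : ℂ) else 0) (fun _ => 0) i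

/-- Second-order remainder bound for the exponential in a complex Banach algebra. -/
lemma exp_remainder_bound {𝔸 : Type*} [NormedRing 𝔸] [NormedAlgebra ℂ 𝔸] [CompleteSpace 𝔸]
    (x : 𝔸) : ‖NormedSpace.exp x - 1 - x‖ ≤ ‖x‖ ^ 2 * Real.exp ‖x‖ := by
  have h := NormedSpace.exp_series_hasSum_exp' (𝕂 := ℂ) x
  have h2 : HasSum (fun n : ℕ => (((Nat.factorial (n + 2) : ℂ)))⁻¹ • x ^ (n + 2))
      (NormedSpace.exp x - 1 - x) := by
    have h3 := (hasSum_nat_add_iff'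
      (f := fun n : ℕ => ((((Nat.factorial n) : ℂ))⁻¹) • x ^ n) 2).2 h
    simpa [Finset.sum_range_succ, Nat.factorial, sub_sub] using h3
  have key : ∀ n : ℕ, ‖(((Nat.factorial (n + 2) : ℂ)))⁻¹ • x ^ (n + 2)‖ ≤
      ‖x‖ ^ 2 * (‖x‖ ^ n / (Nat.factorial n)) := by
    intro n
    rw [norm_smul]
    have h1 : ‖((Nat.factorial (n + 2) : ℂ))⁻¹‖ = ((Nat.factorial (n + 2) : ℝ))⁻¹ := by
      rw [norm_inv]; norm_num
    rw [h1]
    have hb : ‖x ^ (n + 2)‖ ≤ ‖x‖ ^ (n + 2) := norm_pow_le' x (by omega)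
    have h3 : ((Nat.factorial (n + 2) : ℝ))⁻¹ ≤ (((Nat.factorial n) : ℝ))⁻¹ := by
      apply inv_anti₀ (by positivity)
      exact_mod_cast Nat.factorial_le (by omega)
    calc ((Nat.factorial (n + 2) : ℝ))⁻¹ * ‖x ^ (n + 2)‖
        ≤ (((Nat.factorial n) : ℝ))⁻¹ * ‖x‖ ^ (n + 2) :=
          mul_le_mul h3 hb (norm_nonneg _) (by positivity)
      _ = ‖x‖ ^ 2 * (‖x‖ ^ n / (Nat.factorial n)) := by
          rw [pow_add]; field_simp
  have hs2 : Summable (fun n : ℕ => ‖x‖ ^ 2 * (‖x‖ ^ n / (Nat.factorial n))) :=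
    (Real.summable_pow_div_factorial ‖x‖).mul_left _
  have hs1 : Summable (fun n : ℕ => ‖(((Nat.factorial (n + 2) : ℂ)))⁻¹ • x ^ (n + 2)‖) :=
    Summable.of_nonneg_of_le (fun n => norm_nonneg _) key hs2
  calc ‖NormedSpace.exp x - 1 - x‖
      = ‖∑' n : ℕ, (((Nat.factorial (n + 2) : ℂ)))⁻¹ • x ^ (n + 2)‖ := by rw [h2.tsum_eq]
    _ ≤ ∑' n : ℕ, ‖(((Nat.factorial (n + 2) : ℂ)))⁻¹ • x ^ (n + 2)‖ :=
        norm_tsum_le_tsum_norm hs1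
    _ ≤ ∑' n : ℕ, ‖x‖ ^ 2 * (‖x‖ ^ n / (Nat.factorial n)) := Summable.tsum_le_tsum key hs1 hs2
    _ = ‖x‖ ^ 2 * ∑' n : ℕ, ‖x‖ ^ n / (Nat.factorial n) := tsum_mul_left
    _ = ‖x‖ ^ 2 * Real.exp ‖x‖ := by
        rw [Real.exp_eq_exp_ℝ, NormedSpace.exp_eq_tsum_div]

/-- Nonnegativity of the sum of squared entry norms. -/
lemma sqsum_nonneg {p q : Type*} [Fintype p] [Fintype q] (M : Matrix p q ℂ) :
    (0:ℝ) ≤ ∑ i, ∑ j, ‖M i j‖ ^ 2 :=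
  Finset.sum_nonneg fun _ _ => Finset.sum_nonneg fun _ _ => sq_nonneg _

/-- **Local equivalence of geodesic and chordal distances on the Stiefel manifold**
(the nontrivial direction, for `n ≥ 2k`, i.e. `m = n − k ≥ k ≥ 1`): there exist `δ, α > 0`
such that for every horizontal tangent `X = [[A, −Bᴴ],[B, 0]]` (with `A` skew-Hermitian)
with `(1/√2)‖X‖_F ≤ δ`, one has `(1/√2)‖X‖_F ≤ α·‖exp(X)Ψ₀ − Ψ₀‖_F`, i.e. `rⱽ ≤ α·dⱽ`
locally. -/
theorem stiefel_geodesic_le_chordal_locally (k m : ℕ) (hk : 1 ≤ k) (hkm : k ≤ m) :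
    ∃ δ : ℝ, 0 < δ ∧ ∃ α : ℝ, 0 < α ∧
      ∀ (A : Matrix (Fin k) (Fin k) ℂ) (B : Matrix (Fin m) (Fin k) ℂ),
        Aᴴ = -A →
        (1 / Real.sqrt 2) * frobNorm (Matrix.fromBlocks A (-Bᴴ) B 0) ≤ δ →
        (1 / Real.sqrt 2) * frobNorm (Matrix.fromBlocks A (-Bᴴ) B 0) ≤
          α * frobNorm
            (NormedSpace.exp (Matrix.fromBlocks A (-Bᴴ) B 0) * basePoint k m -
              basePoint k m) := by
  have hk' : (1 : ℝ) ≤ (k : ℝ) := by exact_mod_cast hk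
  refine ⟨1 / (12 * k), by positivity, 2, by norm_num, ?_⟩
  intro A B hA hδ
  letI : NormedRing (Matrix (Fin k ⊕ Fin m) (Fin k ⊕ Fin m) ℂ) := Matrix.frobeniusNormedRing
  letI : NormedAlgebra ℂ (Matrix (Fin k ⊕ Fin m) (Fin k ⊕ Fin m) ℂ) :=
    Matrix.frobeniusNormedAlgebra
  letI : NormedAddCommGroup (Matrix (Fin k ⊕ Fin m) (Fin k) ℂ) :=
    Matrix.frobeniusNormedAddCommGroup
  -- `frobNorm` agrees with the Frobenius norm instances
  have hsq : ∀ M : Matrix (Fin k ⊕ Fin m) (Fin k ⊕ Fin m) ℂ, frobNorm M = ‖M‖ := by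
    intro M
    rw [frobNorm, Matrix.frobenius_norm_def, ← Real.sqrt_eq_rpow]
    congr 1
    exact Finset.sum_congr rfl fun i _ => Finset.sum_congr rfl fun j _ => (Real.rpow_two _).symm
  have hre : ∀ M : Matrix (Fin k ⊕ Fin m) (Fin k) ℂ, frobNorm M = ‖M‖ := by
    intro M
    rw [frobNorm, Matrix.frobenius_norm_def, ← Real.sqrt_eq_rpow]
    congr 1
    exact Finset.sum_congr rfl fun i _ => Finset.sum_congr rfl fun j _ => (Real.rpow_two _).symm
  set X : Matrix (Fin k ⊕ Fin m) (Fin k ⊕ Fin m) ℂ := Matrix.fromBlocks A (-Bᴴ) B 0 with hXdef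
  set Ψ : Matrix (Fin k ⊕ Fin m) (Fin k) ℂ := basePoint k m with hΨdef
  set sa : ℝ := ∑ i, ∑ j, ‖A i j‖ ^ 2 with hsa
  set sb : ℝ := ∑ i, ∑ j, ‖B i j‖ ^ 2 with hsb
  -- block computations
  have hΨrows : Ψ =
      Matrix.fromRows (1 : Matrix (Fin k) (Fin k) ℂ) (0 : Matrix (Fin m) (Fin k) ℂ) := by
    rw [hΨdef]
    ext i j
    cases i <;> simp [basePoint, Matrix.fromRows_apply_inl, Matrix.fromRows_apply_inr, Matrix.one_apply]
  have hXΨ : X * Ψ = Matrix.fromRows A B := by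
    rw [hXdef, hΨrows, Matrix.fromBlocks_mul_fromRows]
    simp
  have hX2 : frobNorm X ^ 2 = sa + 2 * sb := by
    rw [hXdef, frobNorm, Real.sq_sqrt (sqsum_nonneg _)]
    simp only [Fintype.sum_sum_type, Matrix.fromBlocks_apply₁₁, Matrix.fromBlocks_apply₁₂,
      Matrix.fromBlocks_apply₂₁, Matrix.fromBlocks_apply₂₂, Matrix.neg_apply,
      Matrix.conjTranspose_apply, norm_neg, norm_star, Matrix.zero_apply, norm_zero,
      Finset.sum_add_distrib]
    rw [Finset.sum_comm (f := fun i j => ‖B j i‖ ^ 2)]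
    simp [hsa, hsb]
    ring
  have hY2 : frobNorm (Matrix.fromRows A B) ^ 2 = sa + sb := by
    rw [frobNorm, Real.sq_sqrt (sqsum_nonneg _)]
    simp [Fintype.sum_sum_type, Matrix.fromRows_apply_inl, Matrix.fromRows_apply_inr, hsa, hsb]
  have hΨn : frobNorm Ψ = Real.sqrt k := by
    rw [hΨdef, frobNorm]
    congr 1
    simp [basePoint, Fintype.sum_sum_type, apply_ite (norm : ℂ → ℝ), ite_pow, Finset.sum_ite_eq]
  -- set up the scalar quantities
  set t : ℝ := 1 / Real.sqrt 2 * frobNorm X with ht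
  have hs2pos : (0:ℝ) < Real.sqrt 2 := Real.sqrt_pos.2 (by norm_num)
  have hXnn : 0 ≤ frobNorm X := Real.sqrt_nonneg _
  have htnn : 0 ≤ t := by positivity
  have hXt : frobNorm X = Real.sqrt 2 * t := by
    rw [ht]; field_simp
  have ht2 : t ^ 2 = (sa + 2 * sb) / 2 := by
    rw [ht, mul_pow, hX2, div_pow, one_pow, Real.sq_sqrt (by norm_num : (0:ℝ) ≤ 2)]
    ring
  -- step 1 : t ≤ ‖XΨ‖
  have saneg : 0 ≤ sa := sqsum_nonneg A
  have sbneg : 0 ≤ sb := sqsum_nonneg B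
  have hYnn : 0 ≤ frobNorm (Matrix.fromRows A B) := Real.sqrt_nonneg _
  have step1 : t ≤ frobNorm (Matrix.fromRows A B) := by
    have h2 : t ^ 2 ≤ frobNorm (Matrix.fromRows A B) ^ 2 := by
      rw [ht2, hY2]; linarith
    calc t = Real.sqrt (t ^ 2) := (Real.sqrt_sq htnn).symm
      _ ≤ Real.sqrt (frobNorm (Matrix.fromRows A B) ^ 2) := Real.sqrt_le_sqrt h2
      _ = frobNorm (Matrix.fromRows A B) := Real.sqrt_sq hYnn
  -- step 2 : remainder estimate
  set E : Matrix (Fin k ⊕ Fin m) (Fin k ⊕ Fin m) ℂ := NormedSpace.exp X with hE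
  have hrem : frobNorm (E - 1 - X) ≤ frobNorm X ^ 2 * Real.exp (frobNorm X) := by
    rw [hsq, hsq, hE]
    exact exp_remainder_bound X
  have hsplit : Matrix.fromRows A B = (E * Ψ - Ψ) - (E - 1 - X) * Ψ := by
    rw [← hXΨ, Matrix.sub_mul, Matrix.sub_mul, Matrix.one_mul]
    abel
  have step2 : frobNorm (Matrix.fromRows A B) ≤
      frobNorm (E * Ψ - Ψ) + frobNorm (E - 1 - X) * frobNorm Ψ := by
    rw [hsplit]
    calc frobNorm ((E * Ψ - Ψ) - (E - 1 - X) * Ψ)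
        ≤ ‖E * Ψ - Ψ‖ + ‖(E - 1 - X) * Ψ‖ := by rw [hre]; exact norm_sub_le _ _
      _ ≤ ‖E * Ψ - Ψ‖ + ‖E - 1 - X‖ * ‖Ψ‖ := by
          gcongr
          exact Matrix.frobenius_norm_mul _ _
      _ = frobNorm (E * Ψ - Ψ) + frobNorm (E - 1 - X) * frobNorm Ψ := by
          rw [hre, hsq, hre]
  -- numeric bookkeeping
  have hδ' : t ≤ 1 / (12 * k) := hδ
  have hkpos : (0:ℝ) < k := by linarith
  have hsk : Real.sqrt k ≤ k := by
    calc Real.sqrt k ≤ Real.sqrt ((k:ℝ) ^ 2) := Real.sqrt_le_sqrt (by nlinarith)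
      _ = k := Real.sqrt_sq (le_of_lt hkpos)
  have hsqrt2le : Real.sqrt 2 ≤ 2 := by
    nlinarith [Real.sq_sqrt (by norm_num : (0:ℝ) ≤ 2), hs2pos]
  have hexp : Real.exp (frobNorm X) ≤ 3 := by
    rw [hXt]
    have h1 : Real.sqrt 2 * t ≤ 1 := by
      have : t ≤ 1 / 12 := by
        calc t ≤ 1 / (12 * k) := hδ'
          _ ≤ 1 / 12 := by
            apply div_le_div_of_nonneg_left (by norm_num) (by norm_num) (by nlinarith)
      nlinarith
    calc Real.exp (Real.sqrt 2 * t) ≤ Real.exp 1 := Real.exp_le_exp.2 h1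
      _ ≤ 3 := by linarith [Real.exp_one_lt_d9]
  -- put everything together
  have hrem2 : frobNorm (E - 1 - X) * frobNorm Ψ ≤ 2 * t ^ 2 * 3 * k := by
    calc frobNorm (E - 1 - X) * frobNorm Ψ
        ≤ (frobNorm X ^ 2 * Real.exp (frobNorm X)) * Real.sqrt k := by
          rw [hΨn]
          exact mul_le_mul hrem le_rfl (Real.sqrt_nonneg _)
            (by positivity)
      _ ≤ (2 * t ^ 2 * 3) * k := by
          have hpow : frobNorm X ^ 2 = 2 * t ^ 2 := by
            rw [hXt, mul_pow, Real.sq_sqrt (by norm_num : (0:ℝ) ≤ 2)]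
          rw [hpow]
          apply mul_le_mul _ hsk (Real.sqrt_nonneg _) (by positivity)
          have h0 : 0 ≤ 2 * t ^ 2 := by positivity
          calc 2 * t ^ 2 * Real.exp (frobNorm X) ≤ 2 * t ^ 2 * 3 :=
            mul_le_mul_of_nonneg_left hexp h0
            _ = 2 * t ^ 2 * 3 := rfl
      _ = 2 * t ^ 2 * 3 * k := rfl
  have hhalf : 2 * t ^ 2 * 3 * k ≤ t / 2 := by
    have h1 : t * k ≤ 1 / 12 := by
      have := mul_le_mul_of_nonneg_right hδ' (le_of_lt hkpos)
      calc t * k ≤ 1 / (12 * k) * k := this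
        _ = 1 / 12 := by field_simp
    nlinarith
  have final : t ≤ 2 * frobNorm (E * Ψ - Ψ) := by
    have := step1.trans step2
    linarith
  exact final
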